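/- Let $U \subseteq \mathbb{R}^m$ be closed, $\bar{u} \in L^2(0,T;\mathbb{R}^m)$ with $\bar u(t) \in U$ a.e., and $v \in L^2(0,T;\mathbb{R}^m)$ with $v(t) \in T_U^\flat(\bar{u}(t))$ a.e. Suppose there exist $\epsilon_0 > 0$ and $\ell \in L^2(0,T;\mathbb{R}^m)$ (scalar-valued bound $\ell(t) \ge 0$) such that $\mathrm{dist}_U(\bar{u}(t) + \epsilon v(t)) \le \epsilon^2 \ell(t)$ for all $\epsilon \in [0,\epsilon_0]$ and a.e. $t$. Let $\sigma \in L^2(0,T;\mathbb{R}^m)$ satisfy $\sigma(t) \in T_U^{\flat(2)}(\bar{u}(t), v(t))$ a.e. Then for every $\epsilon \in (0, \epsilon_0]$ there exists a measurable $\sigma_\epsilon \in L^2(0,T;\mathbb{R}^m)$ such that $\bar{u}(t) + \epsilon v(t) + \epsilon^2 \sigma_\epsilon(t) \in U$ a.e., $\sigma_\epsilon(t) \to \sigma(t)$ a.e. as $\epsilon \to 0^+$, and $\|\sigma_\epsilon\|_{L^2} \le \|\ell\|_{L^2} + 2\|\sigma\|_{L^2}$. -/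

import Mathlib

open Filter Metric Set MeasureTheory Topology
open scoped Classical

/-- Kuratowski lower limit of a family of sets `K h` as `h → 0⁺`:
points whose distance to `K h` tends to `0`. -/
noncomputable def liminfSets {X : Type*} [PseudoMetricSpace X] (K : ℝ → Set X) : Set X :=
  {v | Filter.Tendsto (fun h => Metric.infDist v (K h)) (nhdsWithin 0 (Set.Ioi 0)) (nhds 0)}

/-- The adjacent cone `T_K^♭(x) = Liminf_{h→0⁺} (K - x)/h`. -/
noncomputable def adjCone {X : Type*} [NormedAddCommGroup X] [NormedSpace ℝ X]
    (K : Set X) (x : X) : Set X :=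
  liminfSets (fun h => (fun k => h⁻¹ • (k - x)) '' K)

/-- The second-order adjacent subset `T_K^{♭(2)}(x,v) = Liminf_{h→0⁺} (K - x - hv)/h²`. -/
noncomputable def adjCone2 {X : Type*} [NormedAddCommGroup X] [NormedSpace ℝ X]
    (K : Set X) (x v : X) : Set X :=
  liminfSets (fun h => (fun k => (h ^ 2)⁻¹ • (k - x - h • v)) '' K)


section Aux


section proj
variable {X : Type*} [MetricSpace X] [ProperSpace X]
  [SecondCountableTopology X] [MeasurableSpace X] [BorelSpace X]

lemma hit_meas (U C : Set X) (hU : IsClosed U) (hC : IsClosed C) :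
    MeasurableSet {x | ∃ a ∈ U ∩ C, dist x a = infDist x U} := by
  rcases (U ∩ C).eq_empty_or_nonempty with h | h
  · have : {x | ∃ a ∈ U ∩ C, dist x a = infDist x U} = ∅ := by
      ext x; simp [h]
    rw [this]; exact MeasurableSet.empty
  · have : {x | ∃ a ∈ U ∩ C, dist x a = infDist x U}
        = {x | infDist x (U ∩ C) ≤ infDist x U} := by
      ext x
      constructor
      · rintro ⟨a, haUC, hd⟩
        simp only [mem_setOf_eq]; rw [← hd]; exact infDist_le_dist_of_mem haUC
      · intro hle
        obtain ⟨a, haUC, hinf⟩ := (hU.inter hC).exists_infDist_eq_dist h x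
        refine ⟨a, haUC, le_antisymm (hinf ▸ hle) (infDist_le_dist_of_mem haUC.1)⟩
    rw [this]
    exact measurableSet_le (continuous_infDist_pt _).measurable
      (continuous_infDist_pt _).measurable

lemma meas_dite_find {P : X → ℕ → Prop} (hP : ∀ k, MeasurableSet {x | P x k}) :
    Measurable (fun x => if h : ∃ k, P x k then Nat.find h else 0) := by
  apply measurable_to_countable'
  intro k
  have heq : (fun x => if h : ∃ k, P x k then Nat.find h else 0) ⁻¹' {k} =
      ({x | P x k} ∩ ⋂ j, ⋂ _ : j < k, {x | P x j}ᶜ) ∪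
        ({x | ∃ j, P x j}ᶜ ∩ {x : X | k = 0}) := by
    ext x
    by_cases h : ∃ j, P x j
    · simp only [mem_preimage, mem_singleton_iff, dif_pos h, mem_union, mem_inter_iff,
        mem_setOf_eq, mem_iInter, mem_compl_iff, not_exists]
      rw [Nat.find_eq_iff h]
      constructor
      · rintro ⟨h1, h2⟩; exact Or.inl ⟨h1, fun j hj => h2 j hj⟩
      · rintro (⟨h1, h2⟩ | ⟨h1, _⟩)
        · exact ⟨h1, fun j hj => h2 j hj⟩
        · exact absurd h (by simpa using h1)
    · simp only [mem_preimage, mem_singleton_iff, dif_neg h, mem_union, mem_inter_iff,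
        mem_setOf_eq, mem_iInter, mem_compl_iff, not_exists]
      push_neg at h
      constructor
      · intro hk; exact Or.inr ⟨h, hk.symm⟩
      · rintro (⟨h1, _⟩ | ⟨_, h2⟩)
        · exact absurd h1 (h k)
        · exact h2.symm
  rw [heq]
  have hE : MeasurableSet {x : X | ∃ j, P x j} := by
    have : {x : X | ∃ j, P x j} = ⋃ j, {x | P x j} := by ext x; simp
    rw [this]; exact MeasurableSet.iUnion hP
  exact ((hP k).inter (MeasurableSet.iInter fun j =>
      MeasurableSet.iInter fun _ => (hP j).compl)).union
    (hE.compl.inter (MeasurableSet.const _))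

lemma meas_comp_nat {f : X → ℕ} (hf : Measurable f) {g : ℕ → X → ℕ}
    (hg : ∀ i, Measurable (g i)) : Measurable (fun x => g (f x) x) := by
  apply measurable_to_countable'
  intro k
  have : (fun x => g (f x) x) ⁻¹' {k} = ⋃ i, (f ⁻¹' {i}) ∩ ((g i) ⁻¹' {k}) := by
    ext x
    simp only [mem_preimage, mem_singleton_iff, mem_iUnion, mem_inter_iff]
    exact ⟨fun h => ⟨f x, rfl, h⟩, fun ⟨i, h1, h2⟩ => h1 ▸ h2⟩
  rw [this]
  exact MeasurableSet.iUnion fun i =>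
    (hf (measurableSet_singleton i)).inter (hg i (measurableSet_singleton k))
end proj

set_option linter.unusedSectionVars false in
theorem exists_measurable_proj {X : Type*} [MetricSpace X] [ProperSpace X]
    [SecondCountableTopology X] [MeasurableSpace X] [BorelSpace X]
    (U : Set X) (hU : IsClosed U) (hne : U.Nonempty) :
    ∃ Φ : X → X, Measurable Φ ∧ ∀ x, Φ x ∈ U ∧ dist x (Φ x) = infDist x U := by
  haveI : Nonempty U := hne.to_subtype
  obtain ⟨u0, hu0⟩ := TopologicalSpace.exists_dense_seq U
  set u : ℕ → X := fun k => (u0 k : X) with hu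
  have hmemU : ∀ k, u k ∈ U := fun k => (u0 k).2
  have hdense : ∀ a ∈ U, ∀ δ : ℝ, 0 < δ → ∃ k, dist (u k) a ≤ δ := by
    intro a ha δ hδ
    obtain ⟨k, hk⟩ := (Metric.denseRange_iff).1 hu0 ⟨a, ha⟩ δ hδ
    refine ⟨k, ?_⟩
    rw [dist_comm]
    exact le_of_lt (by simpa [Subtype.dist_eq] using hk)
  set r : X → ℝ := fun x => infDist x U with hr
  have hatt : ∀ x, ∃ a ∈ U, dist x a = r x := fun x => by
    obtain ⟨a, ha, h⟩ := hU.exists_infDist_eq_dist hne x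
    exact ⟨a, ha, h.symm⟩
  set hit : X → Set X → Prop := fun x C => ∃ a ∈ U ∩ C, dist x a = r x with hhit
  set step : ℕ → ℕ → X → ℕ := fun n p x =>
    if h : ∃ k, hit x (closedBall (u k) ((1/2 : ℝ)^(n+1)) ∩ closedBall (u p) ((1/2 : ℝ)^n))
    then Nat.find h else 0 with hstep
  set S : ℕ → X → ℕ := fun n => Nat.rec
    (fun x => if h : ∃ k, hit x (closedBall (u k) 1) then Nat.find h else 0)
    (fun n Sn x => step n (Sn x) x) n with hS
  have hS0 : ∀ x, S 0 x =
      if h : ∃ k, hit x (closedBall (u k) 1) then Nat.find h else 0 := fun _ => rfl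
  have hSsucc : ∀ n x, S (n+1) x = step n (S n x) x := fun _ _ => rfl
  -- invariant
  have inv : ∀ n x, hit x (closedBall (u (S n x)) ((1/2 : ℝ)^n)) := by
    intro n
    induction n with
    | zero =>
      intro x
      obtain ⟨a, ha, hd⟩ := hatt x
      obtain ⟨k, hk⟩ := hdense a ha 1 one_pos
      have hex : ∃ k, hit x (closedBall (u k) 1) :=
        ⟨k, a, ⟨ha, by rwa [mem_closedBall, dist_comm]⟩, hd⟩
      have h0 : S 0 x = Nat.find hex := by rw [hS0 x, dif_pos hex]
      rw [h0]
      simpa using Nat.find_spec hex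
    | succ n ih =>
      intro x
      obtain ⟨a, ⟨haU, hab⟩, hd⟩ := ih x
      obtain ⟨k, hk⟩ := hdense a haU ((1/2 : ℝ)^(n+1)) (by positivity)
      have hex : ∃ k, hit x (closedBall (u k) ((1/2 : ℝ)^(n+1)) ∩
          closedBall (u (S n x)) ((1/2 : ℝ)^n)) :=
        ⟨k, a, ⟨haU, ⟨by rwa [mem_closedBall, dist_comm], hab⟩⟩, hd⟩
      have h1 : S (n+1) x = Nat.find hex := by rw [hSsucc n x, hstep]; exact dif_pos hex
      obtain ⟨a', ⟨ha'U, ha'b⟩, hd'⟩ := Nat.find_spec hex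
      rw [h1]
      exact ⟨a', ⟨ha'U, ha'b.1⟩, hd'⟩
  -- consecutive closeness
  have hclose : ∀ n x, dist (u (S n x)) (u (S (n+1) x)) ≤ 2 * (1/2 : ℝ)^n := by
    intro n x
    obtain ⟨a, ⟨haU, hab⟩, hd⟩ := inv n x
    obtain ⟨k, hk⟩ := hdense a haU ((1/2 : ℝ)^(n+1)) (by positivity)
    have hex : ∃ k, hit x (closedBall (u k) ((1/2 : ℝ)^(n+1)) ∩
        closedBall (u (S n x)) ((1/2 : ℝ)^n)) :=
      ⟨k, a, ⟨haU, ⟨by rwa [mem_closedBall, dist_comm], hab⟩⟩, hd⟩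
    have h1 : S (n+1) x = Nat.find hex := by rw [hSsucc n x, hstep]; exact dif_pos hex
    obtain ⟨a', ⟨ha'U, hb1, hb2⟩, hd'⟩ := Nat.find_spec hex
    rw [h1]
    calc dist (u (S n x)) (u (Nat.find hex))
        ≤ dist (u (S n x)) a' + dist a' (u (Nat.find hex)) := dist_triangle _ _ _
      _ ≤ (1/2 : ℝ)^n + (1/2 : ℝ)^(n+1) := by
          gcongr
          · rw [dist_comm]; exact mem_closedBall.1 hb2
          · exact mem_closedBall.1 hb1
      _ ≤ 2 * (1/2 : ℝ)^n := by rw [pow_succ]; nlinarith [pow_pos (by norm_num : (0:ℝ) < 1/2) n]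
  -- measurability
  have hithelp : ∀ (C : Set X), IsClosed C → MeasurableSet {x | hit x C} :=
    fun C hC => hit_meas U C hU hC
  have hSmeas : ∀ n, Measurable (S n) := by
    intro n
    induction n with
    | zero =>
      have : S 0 = fun x => if h : ∃ k, hit x (closedBall (u k) 1) then Nat.find h else 0 :=
        funext hS0
      rw [this]
      exact meas_dite_find fun k => hithelp _ isClosed_closedBall
    | succ n ih =>
      have : S (n+1) = fun x => step n (S n x) x := funext (hSsucc n)
      rw [this]
      exact meas_comp_nat ih fun i =>
        meas_dite_find fun k => hithelp _ ((isClosed_closedBall.inter isClosed_closedBall))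
  -- Cauchy sequence and limit
  have hcauchy : ∀ x, CauchySeq (fun n => u (S n x)) := by
    intro x
    exact cauchySeq_of_le_geometric (1/2 : ℝ) 2 (by norm_num) (fun n => hclose n x)
  have hlim : ∀ x, ∃ y, Tendsto (fun n => u (S n x)) atTop (𝓝 y) :=
    fun x => cauchySeq_tendsto_of_complete (hcauchy x)
  refine ⟨fun x => (hlim x).choose, ?_, ?_⟩
  · exact measurable_of_tendsto_metrizable' (f := fun n x => u (S n x)) atTop
      (fun n => by exact Measurable.comp (f := S n) (g := u) measurable_from_top (hSmeas n))
      (tendsto_pi_nhds.2 fun x => (hlim x).choose_spec)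
  · intro x
    have hT := (hlim x).choose_spec
    have hmem : (hlim x).choose ∈ U :=
      hU.mem_of_tendsto hT (Filter.Eventually.of_forall fun n => hmemU _)
    refine ⟨hmem, le_antisymm ?_ (infDist_le_dist_of_mem hmem)⟩
    have hd1 : Tendsto (fun n => dist x (u (S n x))) atTop (𝓝 (dist x (hlim x).choose)) :=
      tendsto_const_nhds.dist hT
    have hd2 : Tendsto (fun n : ℕ => r x + (1/2 : ℝ)^n) atTop (𝓝 (r x)) := by
      have := tendsto_pow_atTop_nhds_zero_of_lt_one (by norm_num : (0:ℝ) ≤ 1/2)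
        (by norm_num : (1/2 : ℝ) < 1)
      simpa using tendsto_const_nhds.add this
    refine le_of_tendsto_of_tendsto' hd1 hd2 fun n => ?_
    obtain ⟨a, ⟨haU, hab⟩, hd⟩ := inv n x
    calc dist x (u (S n x)) ≤ dist x a + dist a (u (S n x)) := dist_triangle _ _ _
      _ ≤ r x + (1/2 : ℝ)^n := by rw [hd]; gcongr; exact hab

lemma infDist_image_affine {X : Type*} [NormedAddCommGroup X] [NormedSpace ℝ X]
    [ProperSpace X] (U : Set X) (hU : IsClosed U) (hne : U.Nonempty)
    {c : ℝ} (hc : 0 < c) (a x : X) :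
    infDist x ((fun k => c • (k - a)) '' U) = c * infDist (a + c⁻¹ • x) U := by
  set b := a + c⁻¹ • x with hb
  have key : ∀ k : X, dist x (c • (k - a)) = c * dist b k := by
    intro k
    rw [dist_eq_norm, dist_eq_norm]
    have h1 : x - c • (k - a) = c • (b - k) := by
      rw [hb]
      match_scalars <;> field_simp
    rw [h1, norm_smul, Real.norm_of_nonneg hc.le]
  have hne' : ((fun k => c • (k - a)) '' U).Nonempty := hne.image _
  apply le_antisymm
  · obtain ⟨k, hk, hd⟩ := hU.exists_infDist_eq_dist hne b
    calc infDist x ((fun k => c • (k - a)) '' U) ≤ dist x (c • (k - a)) :=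
          infDist_le_dist_of_mem ⟨k, hk, rfl⟩
      _ = c * dist b k := key k
      _ = c * infDist b U := by rw [← hd]
  · by_contra hlt
    push_neg at hlt
    obtain ⟨y, ⟨k, hk, rfl⟩, hy⟩ := (infDist_lt_iff hne').1 hlt
    rw [key k] at hy
    have : infDist b U ≤ dist b k := infDist_le_dist_of_mem hk
    nlinarith

end Aux

theorem stmt_9 (m : ℕ) (T : ℝ) (hT : 0 < T)
    (U : Set (EuclideanSpace ℝ (Fin m))) (hU : IsClosed U)
    (μ : Measure ℝ) (hμ : μ = volume.restrict (Set.Icc 0 T))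
    (ubar v σ : ℝ → EuclideanSpace ℝ (Fin m)) (ℓ : ℝ → ℝ)
    (hubar2 : MemLp ubar 2 μ) (hv2 : MemLp v 2 μ) (hσ2 : MemLp σ 2 μ) (hℓ2 : MemLp ℓ 2 μ)
    (hubarU : ∀ᵐ t ∂μ, ubar t ∈ U)
    (hvt : ∀ᵐ t ∂μ, v t ∈ adjCone U (ubar t))
    (hℓ0 : ∀ᵐ t ∂μ, 0 ≤ ℓ t)
    (ε₀ : ℝ) (hε₀ : 0 < ε₀)
    (hdist : ∀ ε ∈ Set.Icc (0 : ℝ) ε₀, ∀ᵐ t ∂μ,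
      Metric.infDist (ubar t + ε • v t) U ≤ ε ^ 2 * ℓ t)
    (hσt : ∀ᵐ t ∂μ, σ t ∈ adjCone2 U (ubar t) (v t)) :
    ∃ σ' : ℝ → ℝ → EuclideanSpace ℝ (Fin m),
      (∀ ε ∈ Set.Ioc (0 : ℝ) ε₀,
        MemLp (σ' ε) 2 μ ∧
        (∀ᵐ t ∂μ, ubar t + ε • v t + ε ^ 2 • σ' ε t ∈ U) ∧
        eLpNorm (σ' ε) 2 μ ≤ eLpNorm ℓ 2 μ + 2 * eLpNorm σ 2 μ) ∧
      (∀ᵐ t ∂μ, Tendsto (fun ε => σ' ε t) (nhdsWithin 0 (Set.Ioi 0)) (nhds (σ t))) := by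
  have hμ0 : μ ≠ 0 := by
    intro h
    have h1 : μ (Icc (0:ℝ) T) = ENNReal.ofReal T := by
      rw [hμ, Measure.restrict_apply_self, Real.volume_Icc, sub_zero]
    rw [h] at h1
    simp only [Measure.coe_zero, Pi.zero_apply] at h1
    rw [eq_comm, ENNReal.ofReal_eq_zero] at h1
    linarith
  haveI : (ae μ).NeBot := ae_neBot.2 hμ0
  have hneU : U.Nonempty := by
    obtain ⟨t, ht⟩ := hubarU.exists
    exact ⟨_, ht⟩
  obtain ⟨Φ, hΦm, hΦ⟩ := exists_measurable_proj U hU hneU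
  set p : ℝ → ℝ → EuclideanSpace ℝ (Fin m) :=
    fun ε t => ubar t + ε • v t + ε ^ 2 • σ t with hp
  set s' : ℝ → ℝ → EuclideanSpace ℝ (Fin m) :=
    fun ε t => (ε ^ 2)⁻¹ • (Φ (p ε t) - ubar t - ε • v t) with hs'
  have hdiff : ∀ ε : ℝ, ε ≠ 0 → ∀ t,
      s' ε t - σ t = (ε ^ 2)⁻¹ • (Φ (p ε t) - p ε t) := by
    intro ε hε t
    have h2 : (ε ^ 2 : ℝ) ≠ 0 := pow_ne_zero 2 hε
    calc s' ε t - σ t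
        = (ε ^ 2)⁻¹ • (Φ (p ε t) - ubar t - ε • v t) - (ε ^ 2)⁻¹ • (ε ^ 2 • σ t) := by
          rw [smul_smul, inv_mul_cancel₀ h2, one_smul]
      _ = (ε ^ 2)⁻¹ • (Φ (p ε t) - ubar t - ε • v t - ε ^ 2 • σ t) := (smul_sub _ _ _).symm
      _ = (ε ^ 2)⁻¹ • (Φ (p ε t) - p ε t) := by
          rw [show Φ (p ε t) - ubar t - ε • v t - ε ^ 2 • σ t
              = Φ (p ε t) - (ubar t + ε • v t + ε ^ 2 • σ t) from by abel]
  have hdist_eq : ∀ ε : ℝ, 0 < ε → ∀ t,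
      ‖s' ε t - σ t‖ = (ε ^ 2)⁻¹ * infDist (p ε t) U := by
    intro ε hε t
    rw [hdiff ε hε.ne' t, norm_smul, Real.norm_eq_abs, abs_of_pos (by positivity)]
    rw [show ‖Φ (p ε t) - p ε t‖ = dist (p ε t) (Φ (p ε t)) from by
      rw [dist_comm, dist_eq_norm]]
    rw [(hΦ _).2]
  refine ⟨s', ?_, ?_⟩
  · rintro ε ⟨hε, hεle⟩
    have h2 : (0:ℝ) < ε ^ 2 := by positivity
    have hpm : AEStronglyMeasurable (p ε) μ :=
      (hubar2.aestronglyMeasurable.add (hv2.aestronglyMeasurable.const_smul ε)).add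
        (hσ2.aestronglyMeasurable.const_smul (ε ^ 2))
    have hΦpm : AEStronglyMeasurable (fun t => Φ (p ε t)) μ :=
      (hΦm.comp_aemeasurable hpm.aemeasurable).aestronglyMeasurable
    have hsm : AEStronglyMeasurable (s' ε) μ :=
      (((hΦpm.sub hubar2.aestronglyMeasurable).sub
        (hv2.aestronglyMeasurable.const_smul ε)).const_smul (ε ^ 2)⁻¹)
    have hbd : ∀ᵐ t ∂μ, ‖s' ε t‖ ≤ ℓ t + 2 * ‖σ t‖ := by
      filter_upwards [hdist ε ⟨hε.le, hεle⟩, hℓ0] with t hdt hlt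
      have hdEq : dist (p ε t) (ubar t + ε • v t) = ε ^ 2 * ‖σ t‖ := by
        rw [dist_eq_norm, show p ε t - (ubar t + ε • v t) = ε ^ 2 • σ t from by
          rw [hp]; module, norm_smul, Real.norm_eq_abs, abs_of_pos h2]
      have key : infDist (p ε t) U ≤ ε ^ 2 * ℓ t + ε ^ 2 * ‖σ t‖ := by
        calc infDist (p ε t) U
            ≤ infDist (ubar t + ε • v t) U + dist (p ε t) (ubar t + ε • v t) :=
              infDist_le_infDist_add_dist
          _ ≤ ε ^ 2 * ℓ t + ε ^ 2 * ‖σ t‖ := by rw [hdEq]; gcongr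
      have htri : ‖s' ε t‖ ≤ ‖s' ε t - σ t‖ + ‖σ t‖ := by
        simpa using norm_add_le (s' ε t - σ t) (σ t)
      have hmid : ‖s' ε t - σ t‖ ≤ ℓ t + ‖σ t‖ := by
        rw [hdist_eq ε hε t]
        rw [show ℓ t + ‖σ t‖ = (ε ^ 2)⁻¹ * (ε ^ 2 * ℓ t + ε ^ 2 * ‖σ t‖) from by
          field_simp]
        gcongr
      linarith
    have hg : MemLp (fun t => ℓ t + 2 * ‖σ t‖) 2 μ := hℓ2.add ((hσ2.norm).const_mul 2)
    refine ⟨?_, ?_, ?_⟩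
    · exact MemLp.of_le hg hsm (hbd.mono fun t h => by
        simpa [Real.norm_eq_abs] using h.trans (le_abs_self _))
    · refine Filter.Eventually.of_forall fun t => ?_
      have hsmul : ε ^ 2 • s' ε t = Φ (p ε t) - ubar t - ε • v t := by
        rw [hs']
        simp only
        rw [smul_smul, mul_inv_cancel₀ h2.ne', one_smul]
      rw [hsmul, show ubar t + ε • v t + (Φ (p ε t) - ubar t - ε • v t) = Φ (p ε t) from by abel]
      exact (hΦ _).1
    · calc eLpNorm (s' ε) 2 μ
          ≤ eLpNorm (fun t => ℓ t + 2 * ‖σ t‖) 2 μ :=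
            eLpNorm_mono_ae (hbd.mono fun t h => by
              simpa [Real.norm_eq_abs] using h.trans (le_abs_self _))
        _ ≤ eLpNorm ℓ 2 μ + eLpNorm (fun t => 2 * ‖σ t‖) 2 μ :=
            eLpNorm_add_le hℓ2.aestronglyMeasurable
              ((hσ2.norm.const_mul 2).aestronglyMeasurable) one_le_two
        _ = eLpNorm ℓ 2 μ + 2 * eLpNorm σ 2 μ := by
            congr 1
            rw [show (fun t => 2 * ‖σ t‖) = (2:ℝ) • (fun t => ‖σ t‖) from rfl]
            rw [eLpNorm_const_smul, eLpNorm_norm]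
            norm_num [Real.enorm_eq_ofReal_abs]
  · filter_upwards [hσt] with t ht
    have ht' : Tendsto (fun h : ℝ => infDist (σ t)
        ((fun k => (h ^ 2)⁻¹ • (k - ubar t - h • v t)) '' U)) (𝓝[>] 0) (𝓝 0) := ht
    rw [tendsto_iff_dist_tendsto_zero]
    refine ht'.congr' ?_
    filter_upwards [self_mem_nhdsWithin] with ε (hε : ε ∈ Ioi 0)
    have hε' : (0:ℝ) < ε := hε
    have himg : (fun k => (ε ^ 2)⁻¹ • (k - ubar t - ε • v t)) '' U
        = (fun k => (ε ^ 2)⁻¹ • (k - (ubar t + ε • v t))) '' U := by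
      apply image_congr
      intro k _
      rw [sub_sub]
    rw [himg, infDist_image_affine U hU hneU (by positivity) (ubar t + ε • v t) (σ t)]
    rw [dist_eq_norm, hdist_eq ε hε' t]
    congr 1
    rw [hp]
    simp only [inv_inv]
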